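/- Let c > 0 and γ ∈ (0,1). For k ∈ ℕ define μ(k) = ∫_0^1 e^{−c x^{−γ}} (c x^{−γ})^k / k! dx, the mixed Poisson probability mass function with parameter c x^{−γ}, x uniform on (0,1). Then lim_{k→∞} log μ(k) / log k = −(1 + 1/γ). -/

import Mathlib

open Real Filter

section aux
open MeasureTheory Set Topology

lemma window_pow {k : ℕ} (hk : 1 ≤ k) {t : ℝ} (h1 : (k:ℝ) ≤ t)
    (h2 : t ≤ (k:ℝ) + Real.sqrt k) :
    (k:ℝ) ^ (k:ℝ) * Real.exp (t - k - 1) ≤ t ^ (k:ℝ) := by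
  have hk0 : (0:ℝ) < k := by exact_mod_cast hk
  have ht0 : 0 < t := lt_of_lt_of_le hk0 h1
  have key : Real.log (k:ℝ) * k + (t - k - 1) ≤ Real.log t * k := by
    have hlog : 1 - (k:ℝ)/t ≤ Real.log t - Real.log (k:ℝ) := by
      have h := Real.log_le_sub_one_of_pos (x := (k:ℝ)/t) (by positivity)
      rw [Real.log_div (ne_of_gt hk0) (ne_of_gt ht0)] at h
      linarith
    have h4 : (t - k)^2 ≤ t := by
      have hks : t - (k:ℝ) ≤ Real.sqrt k := by linarith
      have h5 : (t - (k:ℝ))^2 ≤ (Real.sqrt k)^2 :=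
        pow_le_pow_left₀ (by linarith) hks 2
      rw [Real.sq_sqrt hk0.le] at h5
      linarith
    have h3 : (t - k - 1) * t ≤ ((k:ℝ) * (1 - (k:ℝ)/t)) * t := by
      have : (k:ℝ) * (1 - (k:ℝ)/t) * t = k * (t - k) := by field_simp
      rw [this]; nlinarith
    have h3' : t - k - 1 ≤ (k:ℝ) * (1 - (k:ℝ)/t) :=
      le_of_mul_le_mul_right h3 ht0
    nlinarith [mul_le_mul_of_nonneg_left hlog hk0.le]
  rw [Real.rpow_def_of_pos hk0, Real.rpow_def_of_pos ht0, ← Real.exp_add]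
  exact Real.exp_le_exp.mpr key

lemma shape_integrable (c : ℝ) (hc : 0 < c) {s : ℝ} (hs : 0 < s) :
    IntegrableOn (fun y : ℝ => y ^ (s - 1) * Real.exp (-(c * y))) (Ioi (0:ℝ)) := by
  have h := integrableOn_rpow_mul_exp_neg_mul_rpow (s := s - 1) (p := 1) (b := c)
    (by linarith) zero_lt_one hc
  refine h.congr_fun (fun x _ => ?_) measurableSet_Ioi
  simp [Real.rpow_one, neg_mul]

lemma shape_nonneg {c : ℝ} {s : ℝ} {T : Set ℝ} (hT : T ⊆ Ioi (0:ℝ)) (hTm : MeasurableSet T) :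
    0 ≤ᵐ[MeasureTheory.volume.restrict T] (fun y : ℝ => y ^ (s - 1) * Real.exp (-(c * y))) := by
  filter_upwards [MeasureTheory.ae_restrict_mem hTm] with y hy
  exact mul_nonneg (Real.rpow_nonneg (le_of_lt (hT hy)) _) (Real.exp_nonneg _)

lemma mixed_id2 (c γ : ℝ) (hγ0 : 0 < γ) (k : ℕ) :
    (∫ y in Ioi (1:ℝ),
        Real.exp (-(c * y)) * (c * y) ^ k / (k.factorial : ℝ) * ((1/γ) * y ^ (-(1/γ) - 1)))
      = (c ^ k / ((k.factorial : ℝ) * γ)) *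
        ∫ y in Ioi (1:ℝ), y ^ ((k:ℝ) - 1/γ - 1) * Real.exp (-(c * y)) := by
  rw [← MeasureTheory.integral_const_mul]
  refine setIntegral_congr_fun measurableSet_Ioi (fun y hy => ?_)
  have hy0 : (0:ℝ) < y := lt_trans zero_lt_one hy
  have h1 : (c * y) ^ k = c ^ k * y ^ ((k:ℝ)) := by
    rw [mul_pow, Real.rpow_natCast]
  have h2 : y ^ ((k:ℝ)) * y ^ (-(1/γ) - 1) = y ^ ((k:ℝ) - 1/γ - 1) := by
    rw [← Real.rpow_add hy0]
    ring_nf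
  rw [h1, ← h2]
  ring

lemma mixed_id (c γ : ℝ) (hc : 0 < c) (hγ0 : 0 < γ) (k : ℕ) :
    (∫ x in (0:ℝ)..1, Real.exp (-(c * x ^ (-γ))) * (c * x ^ (-γ)) ^ k / (k.factorial : ℝ))
      = ∫ y in Ioi (1:ℝ),
          Real.exp (-(c * y)) * (c * y) ^ k / (k.factorial : ℝ) * ((1/γ) * y ^ (-(1/γ) - 1)) := by
  set F : ℝ → ℝ := fun x => Real.exp (-(c * x ^ (-γ))) * (c * x ^ (-γ)) ^ k / (k.factorial : ℝ)
    with hF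
  set h : ℝ → ℝ := fun y =>
    Real.exp (-(c * y)) * (c * y) ^ k / (k.factorial : ℝ) * ((1/γ) * y ^ (-(1/γ) - 1)) with hh
  have hγ : γ ≠ 0 := hγ0.ne'
  have key := MeasureTheory.integral_comp_rpow_Ioi ((Ioi (1:ℝ)).indicator h)
      (p := -γ) (by simpa using hγ)
  have hL : (∫ x in Ioi (0:ℝ), (|(-γ)| * x ^ (-γ - 1)) • (Ioi (1:ℝ)).indicator h (x ^ (-γ)))
      = ∫ x in Ioi (0:ℝ), (Ioo (0:ℝ) 1).indicator F x := by
    refine setIntegral_congr_fun measurableSet_Ioi (fun x hx => ?_)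
    have hx0 : (0:ℝ) < x := hx
    by_cases hx1 : x < 1
    · have hmem : x ^ (-γ) ∈ Ioi (1:ℝ) := by
        rw [mem_Ioi]
        exact Real.one_lt_rpow_iff_of_pos hx0 |>.mpr (Or.inr ⟨hx1, by linarith⟩)
      rw [Set.indicator_of_mem hmem, Set.indicator_of_mem (by exact ⟨hx0, hx1⟩ : x ∈ Ioo (0:ℝ) 1)]
      have hpow : (x ^ (-γ)) ^ (-(1/γ) - 1) = x ^ (1 + γ) := by
        rw [← Real.rpow_mul hx0.le]
        congr 1
        field_simp
        ring
      have hxne : x ^ (-γ - 1) * x ^ (1 + γ) = 1 := by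
        rw [← Real.rpow_add hx0]
        have h0 : -γ - 1 + (1 + γ) = 0 := by ring
        rw [h0, Real.rpow_zero]
      simp only [smul_eq_mul, hh, hF]
      rw [hpow, abs_neg, abs_of_pos hγ0]
      have hEq : γ * x ^ (-γ - 1) *
          (Real.exp (-(c * x ^ (-γ))) * (c * x ^ (-γ)) ^ k / (k.factorial:ℝ) *
            (1 / γ * x ^ (1 + γ)))
          = Real.exp (-(c * x ^ (-γ))) * (c * x ^ (-γ)) ^ k / (k.factorial:ℝ) *
            (x ^ (-γ - 1) * x ^ (1 + γ)) := by
        field_simp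
      rw [hEq, hxne, mul_one]
    · have hnmem : x ^ (-γ) ∉ Ioi (1:ℝ) := by
        rw [mem_Ioi, not_lt]
        exact Real.rpow_le_one_of_one_le_of_nonpos (not_lt.mp hx1) (by linarith)
      rw [Set.indicator_of_notMem hnmem, Set.indicator_of_notMem
        (by simp [not_lt.mp hx1] : x ∉ Ioo (0:ℝ) 1)]
      simp
  rw [hL] at key
  rw [MeasureTheory.integral_indicator measurableSet_Ioo] at key
  rw [MeasureTheory.integral_indicator measurableSet_Ioi] at key
  rw [Measure.restrict_restrict measurableSet_Ioo, Measure.restrict_restrict measurableSet_Ioi]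
    at key
  rw [Set.inter_eq_self_of_subset_left Set.Ioo_subset_Ioi_self,
    Set.inter_eq_self_of_subset_left (Set.Ioi_subset_Ioi zero_le_one)] at key
  rw [intervalIntegral.integral_of_le zero_le_one, MeasureTheory.integral_Ioc_eq_integral_Ioo]
  exact key

lemma gamma_interp {x : ℕ} (hx : 1 ≤ x) {θ : ℝ} (hθ0 : 0 ≤ θ) (hθ1 : θ ≤ 1) :
    Real.Gamma ((x:ℝ) + θ) ≤ Real.Gamma (x:ℝ) * (x:ℝ) ^ θ := by
  have hx0 : (0:ℝ) < x := by exact_mod_cast hx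
  have h := Real.convexOn_log_Gamma.2 (Set.mem_Ioi.mpr hx0)
    (Set.mem_Ioi.mpr (by linarith : (0:ℝ) < (x:ℝ) + 1))
    (by linarith : (0:ℝ) ≤ 1 - θ) hθ0 (by ring)
  simp only [smul_eq_mul, Function.comp] at h
  have harg : (1 - θ) * (x:ℝ) + θ * ((x:ℝ) + 1) = (x:ℝ) + θ := by ring
  rw [harg, Real.Gamma_add_one (ne_of_gt hx0),
    Real.log_mul (ne_of_gt hx0) (ne_of_gt (Real.Gamma_pos_of_pos hx0))] at h
  have hpos : 0 < Real.Gamma ((x:ℝ) + θ) := Real.Gamma_pos_of_pos (by linarith)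
  have hGpos := Real.Gamma_pos_of_pos hx0
  calc Real.Gamma ((x:ℝ) + θ) = Real.exp (Real.log (Real.Gamma ((x:ℝ) + θ))) :=
        (Real.exp_log hpos).symm
    _ ≤ Real.exp ((1 - θ) * Real.log (Real.Gamma (x:ℝ)) +
          θ * (Real.log (x:ℝ) + Real.log (Real.Gamma (x:ℝ)))) := Real.exp_le_exp.mpr h
    _ = Real.Gamma (x:ℝ) * (x:ℝ) ^ θ := by
        have he : (1 - θ) * Real.log (Real.Gamma (x:ℝ)) +
            θ * (Real.log (x:ℝ) + Real.log (Real.Gamma (x:ℝ)))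
            = Real.log (Real.Gamma (x:ℝ)) + Real.log (x:ℝ) * θ := by ring
        rw [he, Real.exp_add, Real.exp_log hGpos, ← Real.rpow_def_of_pos hx0]

lemma gamma_ratio (γ : ℝ) (hγ0 : 0 < γ) (hγ1 : γ < 1) :
    ∀ᶠ k : ℕ in atTop, Real.Gamma ((k:ℝ) - 1/γ) ≤
      (k.factorial : ℝ) * ((2:ℝ) ^ ((1:ℝ) + 1/γ) * (k:ℝ) ^ (-((1:ℝ) + 1/γ))) := by
  set p : ℝ := 1/γ with hp
  have hp1 : 1 < p := by
    rw [hp]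
    rw [lt_div_iff₀ hγ0]
    linarith
  set m : ℕ := ⌈p⌉₊ + 1 with hm
  have hm2 : 2 ≤ m := by
    have : 1 ≤ ⌈p⌉₊ := Nat.one_le_ceil_iff.mpr (by linarith)
    omega
  set θ : ℝ := (⌈p⌉₊ : ℝ) - p with hθ
  have hθ0 : 0 ≤ θ := by
    have := Nat.le_ceil p
    simp [hθ]; linarith
  have hθ1 : θ ≤ 1 := by
    have := Nat.ceil_lt_add_one (by linarith : (0:ℝ) ≤ p)
    simp [hθ]; linarith
  have hmθ : (m:ℝ) = p + 1 + θ := by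
    rw [hm, hθ]; push_cast; ring
  filter_upwards [eventually_ge_atTop (2*m), eventually_ge_atTop 1] with k hk hk1
  set x : ℕ := k + 1 - m with hx
  have hmk : m ≤ k := by omega
  have hx1 : 1 ≤ x := by omega
  have hxcast : (x:ℝ) = (k:ℝ) + 1 - m := by
    rw [hx]; push_cast [Nat.cast_sub (by omega : m ≤ k + 1)]; ring
  have hx0 : (0:ℝ) < x := by exact_mod_cast hx1
  have hkp : (k:ℝ) - p = (x:ℝ) + θ := by rw [hxcast, hmθ]; ring
  have hGa : Real.Gamma ((k:ℝ) - p) ≤ Real.Gamma (x:ℝ) * (x:ℝ) ^ θ := by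
    rw [hkp]; exact gamma_interp hx1 hθ0 hθ1
  have hGx : Real.Gamma (x:ℝ) = ((x-1).factorial : ℝ) := by
    have := Real.Gamma_nat_eq_factorial (x - 1)
    rw [← this]
    congr 1
    push_cast [Nat.cast_sub hx1]
    ring
  have hfact : ((x-1).factorial : ℝ) * (x:ℝ) ^ (m:ℕ) ≤ (k.factorial : ℝ) := by
    have h := Nat.factorial_mul_pow_le_factorial (m := x - 1) (n := m)
    have hxm : x - 1 + 1 = x := by omega
    have hkm : x - 1 + m = k := by omega
    rw [hxm, hkm] at h
    exact_mod_cast h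
  -- combine
  have hxpow : ((x:ℝ) ^ (m:ℕ) : ℝ) = (x:ℝ) ^ ((m:ℕ):ℝ) := (Real.rpow_natCast _ _).symm
  have hstep : Real.Gamma ((k:ℝ) - p) ≤ (k.factorial : ℝ) * (x:ℝ) ^ (θ - (m:ℝ)) := by
    have h1 : Real.Gamma ((k:ℝ) - p) ≤ ((x-1).factorial : ℝ) * (x:ℝ) ^ θ := by
      rw [hGx] at hGa; exact hGa
    have h2 : ((x-1).factorial : ℝ) ≤ (k.factorial : ℝ) / (x:ℝ) ^ ((m:ℕ):ℝ) := by
      rw [le_div_iff₀ (by rw [← hxpow]; positivity)]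
      rw [← hxpow]; exact hfact
    calc Real.Gamma ((k:ℝ) - p) ≤ ((x-1).factorial : ℝ) * (x:ℝ) ^ θ := h1
      _ ≤ ((k.factorial : ℝ) / (x:ℝ) ^ ((m:ℕ):ℝ)) * (x:ℝ) ^ θ := by
          apply mul_le_mul_of_nonneg_right h2 (Real.rpow_nonneg hx0.le _)
      _ = (k.factorial : ℝ) * ((x:ℝ) ^ θ / (x:ℝ) ^ ((m:ℕ):ℝ)) := by
          rw [div_mul_eq_mul_div, mul_div_assoc]
      _ = (k.factorial : ℝ) * (x:ℝ) ^ (θ - (m:ℝ)) := by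
          rw [← Real.rpow_sub hx0]
  have hθm : θ - (m:ℝ) = -(1 + p) := by rw [hmθ]; ring
  rw [hθm] at hstep
  -- x ≥ k/2
  have hxk : (k:ℝ)/2 ≤ (x:ℝ) := by
    rw [hxcast]
    have : (2*m : ℝ) ≤ (k:ℝ) := by exact_mod_cast hk
    push_cast at this ⊢
    linarith
  have hk2 : (0:ℝ) < (k:ℝ)/2 := by
    have : (1:ℝ) ≤ (k:ℝ) := by exact_mod_cast hk1
    linarith
  have hmono : (x:ℝ) ^ (-(1+p)) ≤ ((k:ℝ)/2) ^ (-(1+p)) :=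
    Real.rpow_le_rpow_of_nonpos hk2 hxk (by linarith)
  have hsplit : ((k:ℝ)/2) ^ (-(1+p)) = (2:ℝ) ^ ((1:ℝ)+p) * (k:ℝ) ^ (-((1:ℝ)+p)) := by
    have hk0 : (0:ℝ) ≤ (k:ℝ) := by positivity
    rw [Real.rpow_neg (by positivity), Real.div_rpow hk0 (by norm_num),
      Real.rpow_neg hk0, inv_div, div_eq_mul_inv]
  calc Real.Gamma ((k:ℝ) - p) ≤ (k.factorial : ℝ) * (x:ℝ) ^ (-(1+p)) := hstep
    _ ≤ (k.factorial : ℝ) * ((k:ℝ)/2) ^ (-(1+p)) := by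
        apply mul_le_mul_of_nonneg_left hmono (by positivity)
    _ = (k.factorial : ℝ) * ((2:ℝ) ^ ((1:ℝ)+p) * (k:ℝ) ^ (-((1:ℝ)+p))) := by rw [hsplit]

lemma upper_bd (c γ : ℝ) (hc : 0 < c) (hγ0 : 0 < γ) (hγ1 : γ < 1) :
    ∀ᶠ k : ℕ in atTop,
      (∫ x in (0:ℝ)..1, Real.exp (-(c * x ^ (-γ))) * (c * x ^ (-γ)) ^ k / (k.factorial : ℝ))
        ≤ (c ^ ((1:ℝ)/γ) / γ * (2:ℝ) ^ ((1:ℝ) + 1/γ)) * (k:ℝ) ^ (-((1:ℝ) + 1/γ)) := by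
  filter_upwards [gamma_ratio γ hγ0 hγ1, eventually_gt_atTop ⌈1/γ⌉₊] with k hΓ hkc
  have hs : 0 < (k:ℝ) - 1/γ := by
    have h1 : (1/γ) ≤ (⌈1/γ⌉₊:ℝ) := Nat.le_ceil _
    have h2 : (⌈1/γ⌉₊:ℝ) + 1 ≤ (k:ℝ) := by exact_mod_cast hkc
    linarith
  have hkf : (0:ℝ) < (k.factorial : ℝ) := by exact_mod_cast k.factorial_pos
  rw [mixed_id c γ hc hγ0 k, mixed_id2 c γ hγ0 k]
  set J := ∫ y in Ioi (1:ℝ), y ^ ((k:ℝ) - 1/γ - 1) * Real.exp (-(c * y)) with hJdef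
  have hJle : J ≤ (1/c) ^ ((k:ℝ) - 1/γ) * Real.Gamma ((k:ℝ) - 1/γ) := by
    rw [← Real.integral_rpow_mul_exp_neg_mul_Ioi hs hc]
    exact setIntegral_mono_set (shape_integrable c hc hs)
      (shape_nonneg (fun y hy => hy) measurableSet_Ioi)
      (HasSubset.Subset.eventuallyLE (Ioi_subset_Ioi zero_le_one))
  have step1 : (c ^ k / ((k.factorial:ℝ) * γ)) * J
      ≤ (c ^ k / ((k.factorial:ℝ) * γ)) * ((1/c) ^ ((k:ℝ) - 1/γ) *
        ((k.factorial : ℝ) * ((2:ℝ) ^ ((1:ℝ) + 1/γ) * (k:ℝ) ^ (-((1:ℝ) + 1/γ))))) := by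
    apply mul_le_mul_of_nonneg_left _ (by positivity)
    calc J ≤ (1/c) ^ ((k:ℝ) - 1/γ) * Real.Gamma ((k:ℝ) - 1/γ) := hJle
      _ ≤ (1/c) ^ ((k:ℝ) - 1/γ) *
          ((k.factorial : ℝ) * ((2:ℝ) ^ ((1:ℝ) + 1/γ) * (k:ℝ) ^ (-((1:ℝ) + 1/γ)))) :=
        mul_le_mul_of_nonneg_left hΓ (Real.rpow_nonneg (by positivity) _)
  refine le_trans step1 (le_of_eq ?_)
  have hck : (c:ℝ)^(k:ℕ) * (1/c) ^ ((k:ℝ) - 1/γ) = c ^ ((1:ℝ)/γ) := by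
    rw [one_div, Real.inv_rpow hc.le, ← Real.rpow_neg hc.le, ← Real.rpow_natCast c k,
      ← Real.rpow_add hc]
    congr 1
    ring
  set A := (2:ℝ) ^ ((1:ℝ) + 1/γ) * (k:ℝ) ^ (-((1:ℝ) + 1/γ)) with hA
  have expand : c ^ k / ((k.factorial:ℝ) * γ) * ((1/c) ^ ((k:ℝ) - 1/γ) * ((k.factorial:ℝ) * A))
      = (c ^ k * (1/c) ^ ((k:ℝ) - 1/γ)) * A / γ * ((k.factorial:ℝ)/(k.factorial:ℝ)) := by
    ring
  rw [expand, div_self hkf.ne', mul_one, hck, hA]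
  ring

lemma lower_bd (c γ : ℝ) (hc : 0 < c) (hγ0 : 0 < γ) (hγ1 : γ < 1) :
    ∀ᶠ k : ℕ in atTop,
      (Real.exp (-1) / ((Real.sqrt π + 1) * Real.sqrt 2 * γ * c) * (2/c) ^ (-(1/γ) - 1))
          * (k:ℝ) ^ (-(1/γ) - 1)
        ≤ ∫ x in (0:ℝ)..1,
            Real.exp (-(c * x ^ (-γ))) * (c * x ^ (-γ)) ^ k / (k.factorial : ℝ) := by
  set K := Real.sqrt π + 1 with hK
  have hK0 : 0 < K := by positivity
  have hstir : ∀ᶠ n : ℕ in atTop, Stirling.stirlingSeq n < K :=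
    Stirling.tendsto_stirlingSeq_sqrt_pi.eventually_lt_const (by simp [hK])
  filter_upwards [hstir, eventually_ge_atTop 1,
    (tendsto_natCast_atTop_atTop (R := ℝ)).eventually_ge_atTop (c + 1),
    (tendsto_natCast_atTop_atTop (R := ℝ)).eventually_ge_atTop (1/γ + 2)]
    with k hsk hk1 hkc hkγ
  have hk0 : (0:ℝ) < k := by
    have : (1:ℝ) ≤ (k:ℝ) := by exact_mod_cast hk1
    linarith
  have hsqk : 0 ≤ Real.sqrt k := Real.sqrt_nonneg _
  have h1s : 1 ≤ Real.sqrt k := by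
    rw [show (1:ℝ) = Real.sqrt 1 from (Real.sqrt_one).symm]
    exact Real.sqrt_le_sqrt (by exact_mod_cast hk1)
  have hs2 : Real.sqrt k * Real.sqrt k = (k:ℝ) := Real.mul_self_sqrt hk0.le
  have hsqk_le : Real.sqrt k ≤ (k:ℝ) := by nlinarith
  have hs : 0 < (k:ℝ) - 1/γ := by linarith
  set y₁ := (k:ℝ)/c with hy₁
  set y₂ := ((k:ℝ) + Real.sqrt k)/c with hy₂
  have hy1 : 1 < y₁ := by
    rw [hy₁, lt_div_iff₀ hc]; linarith
  have hy12 : y₁ ≤ y₂ := by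
    rw [hy₁, hy₂]
    exact (div_le_div_iff_of_pos_right hc).mpr (by linarith)
  have hy20 : 0 < y₂ := lt_of_lt_of_le (lt_trans zero_lt_one hy1) hy12
  set E : ℝ := -(1/γ) - 1 with hE
  have hE0 : E ≤ 0 := by
    rw [hE]
    have : 0 < 1/γ := by positivity
    linarith
  set shp : ℝ → ℝ := fun y => y ^ ((k:ℝ) - 1/γ - 1) * Real.exp (-(c * y)) with hshp
  set B : ℝ := (k:ℝ) ^ ((k:ℝ)) * Real.exp (-(k:ℝ) - 1) / c ^ ((k:ℝ)) * y₂ ^ E with hB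
  -- pointwise bound on the window
  have hpt : ∀ y ∈ Icc y₁ y₂, B ≤ shp y := by
    intro y hy
    have hy0 : 0 < y := lt_trans zero_lt_one (lt_of_lt_of_le hy1 hy.1)
    have ht1 : (k:ℝ) ≤ c * y := by
      have := hy.1
      rw [hy₁, div_le_iff₀ hc] at this
      linarith [this]
    have ht2 : c * y ≤ (k:ℝ) + Real.sqrt k := by
      have := hy.2
      rw [hy₂, le_div_iff₀ hc] at this
      linarith [this]
    have hwin := window_pow hk1 ht1 ht2
    have hyE : y₂ ^ E ≤ y ^ E := Real.rpow_le_rpow_of_nonpos hy0 hy.2 hE0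
    have hsplit : shp y = (c*y) ^ ((k:ℝ)) * Real.exp (-(c * y)) / c ^ ((k:ℝ)) * y ^ E := by
      rw [hshp, hE]
      simp only
      rw [show (k:ℝ) - 1/γ - 1 = (k:ℝ) + (-(1/γ) - 1) from by ring, Real.rpow_add hy0,
        Real.mul_rpow hc.le hy0.le]
      have hcne : (c:ℝ) ^ ((k:ℝ)) ≠ 0 := (Real.rpow_pos_of_pos hc _).ne'
      field_simp
    have hBeq : B = (k:ℝ) ^ ((k:ℝ)) * Real.exp (c*y - (k:ℝ) - 1) * Real.exp (-(c * y))
        / c ^ ((k:ℝ)) * y₂ ^ E := by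
      rw [hB]
      have : Real.exp (c*y - (k:ℝ) - 1) * Real.exp (-(c * y)) = Real.exp (-(k:ℝ) - 1) := by
        rw [← Real.exp_add]; congr 1; ring
      rw [mul_assoc ((k:ℝ) ^ ((k:ℝ))), this]
    rw [hsplit, hBeq]
    have hcpow : 0 < c ^ ((k:ℝ)) := Real.rpow_pos_of_pos hc _
    gcongr
  -- integrability
  have hint0 : IntegrableOn shp (Ioi (0:ℝ)) := shape_integrable c hc hs
  have hint1 : IntegrableOn shp (Ioi (1:ℝ)) :=
    hint0.mono_set (Ioi_subset_Ioi zero_le_one)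
  have hsubIcc : Icc y₁ y₂ ⊆ Ioi (1:ℝ) := fun y hy => lt_of_lt_of_le hy1 hy.1
  have hintIcc : IntegrableOn shp (Icc y₁ y₂) := hint1.mono_set hsubIcc
  -- window integral bound
  have hvol : (MeasureTheory.volume (Icc y₁ y₂)).toReal = Real.sqrt k / c := by
    rw [Real.volume_Icc, ENNReal.toReal_ofReal (by linarith)]
    rw [hy₂, hy₁, div_sub_div_same]
    congr 1
    ring
  have hwindow : B * (Real.sqrt k / c) ≤ ∫ y in Icc y₁ y₂, shp y := by
    rw [← hvol]
    exact setIntegral_ge_of_const_le_real measurableSet_Icc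
      (by rw [Real.volume_Icc]; exact ENNReal.ofReal_ne_top) hpt hintIcc
  have hJge : ∫ y in Icc y₁ y₂, shp y ≤ ∫ y in Ioi (1:ℝ), shp y := by
    refine setIntegral_mono_set hint1 (shape_nonneg (fun y (hy : y ∈ Ioi (1:ℝ)) => mem_Ioi.mpr (lt_trans zero_lt_one (mem_Ioi.mp hy)))
      measurableSet_Ioi) (HasSubset.Subset.eventuallyLE hsubIcc)
  -- Stirling
  have hden : 0 < Real.sqrt (2*(k:ℝ)) * ((k:ℝ)/Real.exp 1) ^ k := by positivity
  have hfactle : (k.factorial : ℝ) ≤ K * (Real.sqrt (2*(k:ℝ)) * ((k:ℝ)/Real.exp 1) ^ k) := by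
    have hdef : Stirling.stirlingSeq k
        = (k.factorial : ℝ) / (Real.sqrt (2*(k:ℝ)) * ((k:ℝ)/Real.exp 1) ^ k) := by
      rw [Stirling.stirlingSeq]
    rw [hdef, div_lt_iff₀ hden] at hsk
    linarith [hsk.le]
  have hpowid : ((k:ℝ)/Real.exp 1) ^ k = (k:ℝ) ^ ((k:ℝ)) * Real.exp (-(k:ℝ)) := by
    rw [div_pow, ← Real.rpow_natCast (k:ℝ) k, Real.exp_one_pow, Real.exp_neg, div_eq_mul_inv]
  -- assemble
  rw [mixed_id c γ hc hγ0 k, mixed_id2 c γ hγ0 k]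
  have hchain : (c ^ k / ((k.factorial:ℝ) * γ)) * (B * (Real.sqrt k / c))
      ≤ (c ^ k / ((k.factorial:ℝ) * γ)) * ∫ y in Ioi (1:ℝ), shp y := by
    apply mul_le_mul_of_nonneg_left (le_trans hwindow hJge) (by positivity)
  refine le_trans ?_ hchain
  -- final numeric bound
  have hfac0 : (0:ℝ) < (k.factorial : ℝ) := by exact_mod_cast k.factorial_pos
  have hckid : (c:ℝ) ^ (k:ℕ) = c ^ ((k:ℝ)) := (Real.rpow_natCast c k).symm
  have hLHSeq : (c ^ k / ((k.factorial:ℝ) * γ)) * (B * (Real.sqrt k / c))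
      = ((k:ℝ) ^ ((k:ℝ)) * Real.exp (-(k:ℝ)) / (k.factorial:ℝ)) *
        (Real.exp (-1) * y₂ ^ E * Real.sqrt k / (γ * c)) := by
    rw [hB, hckid]
    have hcne : (c:ℝ) ^ ((k:ℝ)) ≠ 0 := (Real.rpow_pos_of_pos hc _).ne'
    have hexp : Real.exp (-(k:ℝ) - 1) = Real.exp (-(k:ℝ)) * Real.exp (-1) := by
      rw [← Real.exp_add, sub_eq_add_neg]
    field_simp
    rw [hexp]
  rw [hLHSeq]
  have hstep2 : Real.exp (-1) / (K * Real.sqrt 2 * γ * c) * y₂ ^ E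
      ≤ ((k:ℝ) ^ ((k:ℝ)) * Real.exp (-(k:ℝ)) / (k.factorial:ℝ)) *
        (Real.exp (-1) * y₂ ^ E * Real.sqrt k / (γ * c)) := by
    have h1 : 1 / (K * Real.sqrt (2*(k:ℝ))) ≤ (k:ℝ) ^ ((k:ℝ)) * Real.exp (-(k:ℝ)) / (k.factorial:ℝ) := by
      rw [div_le_div_iff₀ (by positivity) hfac0]
      rw [hpowid] at hfactle
      nlinarith [hfactle]
    have hy2E : 0 ≤ y₂ ^ E := Real.rpow_nonneg hy20.le _
    have hs2k : Real.sqrt (2*(k:ℝ)) = Real.sqrt 2 * Real.sqrt k := Real.sqrt_mul (by norm_num) _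
    calc Real.exp (-1) / (K * Real.sqrt 2 * γ * c) * y₂ ^ E
        = (1 / (K * Real.sqrt (2*(k:ℝ)))) * (Real.exp (-1) * y₂ ^ E * Real.sqrt k / (γ * c)) := by
          rw [hs2k]
          have hsknz : Real.sqrt k ≠ 0 := by positivity
          field_simp
      _ ≤ _ := by
          apply mul_le_mul_of_nonneg_right h1 (by positivity)
  refine le_trans ?_ hstep2
  -- y₂ ^ E ≥ (2/c)^E * k^E
  have hy2le : y₂ ≤ (2/c) * (k:ℝ) := by
    rw [hy₂, div_le_iff₀ hc]
    have : (2/c) * (k:ℝ) * c = 2 * (k:ℝ) := by field_simp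
    rw [this]
    linarith
  have hy2E : ((2/c) * (k:ℝ)) ^ E ≤ y₂ ^ E :=
    Real.rpow_le_rpow_of_nonpos hy20 hy2le hE0
  have hmulE : ((2/c) * (k:ℝ)) ^ E = (2/c) ^ E * (k:ℝ) ^ E :=
    Real.mul_rpow (by positivity) hk0.le
  calc Real.exp (-1) / (K * Real.sqrt 2 * γ * c) * (2/c) ^ E * (k:ℝ) ^ E
      = Real.exp (-1) / (K * Real.sqrt 2 * γ * c) * ((2/c) * (k:ℝ)) ^ E := by
        rw [hmulE]; ring
    _ ≤ Real.exp (-1) / (K * Real.sqrt 2 * γ * c) * y₂ ^ E := by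
        apply mul_le_mul_of_nonneg_left hy2E (by positivity)

/-- The mixed Poisson distribution `μ(k) = ∫_0^1 e^{-c x^{-γ}} (c x^{-γ})^k / k! dx`
satisfies `μ(k) = k^{-(1+1/γ) + o(1)}`, i.e. `log μ(k) / log k → -(1 + 1/γ)`. -/
theorem stmt16 (c γ : ℝ) (hc : 0 < c) (hγ0 : 0 < γ) (hγ1 : γ < 1) :
    Filter.Tendsto
      (fun k : ℕ =>
        Real.log (∫ x in (0 : ℝ)..1,
            Real.exp (-(c * x ^ (-γ))) * (c * x ^ (-γ)) ^ k / (k.factorial : ℝ))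
          / Real.log (k : ℝ))
      Filter.atTop (nhds (-(1 + 1 / γ))) := by
  set μf : ℕ → ℝ := fun k => ∫ x in (0 : ℝ)..1,
      Real.exp (-(c * x ^ (-γ))) * (c * x ^ (-γ)) ^ k / (k.factorial : ℝ) with hμf
  set a : ℝ := 1 + 1/γ with ha
  set C₁ : ℝ := Real.exp (-1) / ((Real.sqrt π + 1) * Real.sqrt 2 * γ * c) * (2/c) ^ (-(1/γ) - 1)
    with hC₁def
  set C₂ : ℝ := c ^ ((1:ℝ)/γ) / γ * (2:ℝ) ^ ((1:ℝ) + 1/γ) with hC₂def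
  have hC₁ : 0 < C₁ := by rw [hC₁def]; positivity
  have hC₂ : 0 < C₂ := by rw [hC₂def]; positivity
  have hEa : -(1/γ) - 1 = -a := by rw [ha]; ring
  have hlogk : Tendsto (fun k : ℕ => Real.log k) atTop atTop :=
    Real.tendsto_log_atTop.comp tendsto_natCast_atTop_atTop
  have hlim : ∀ C : ℝ, Tendsto (fun k : ℕ => Real.log C / Real.log k + (-a)) atTop (𝓝 (-a)) := by
    intro C
    have h0 : Tendsto (fun k : ℕ => Real.log C / Real.log k) atTop (𝓝 0) :=
      Tendsto.div_atTop tendsto_const_nhds hlogk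
    simpa using h0.add (tendsto_const_nhds (x := -a))
  have key : ∀ᶠ k : ℕ in atTop,
      Real.log C₁ / Real.log k + (-a) ≤ Real.log (μf k) / Real.log k ∧
      Real.log (μf k) / Real.log k ≤ Real.log C₂ / Real.log k + (-a) := by
    filter_upwards [lower_bd c γ hc hγ0 hγ1, upper_bd c γ hc hγ0 hγ1, eventually_ge_atTop 2]
      with k hl hu hk2
    have hk1 : (1:ℝ) < (k:ℝ) := by exact_mod_cast (by omega : 1 < k)
    have hk0 : (0:ℝ) < (k:ℝ) := by linarith
    have hlogk0 : 0 < Real.log (k:ℝ) := Real.log_pos hk1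
    have hkE : 0 < (k:ℝ) ^ (-(1/γ) - 1) := Real.rpow_pos_of_pos hk0 _
    have hμ0 : 0 < μf k := lt_of_lt_of_le (by positivity) (show C₁ * (k:ℝ) ^ (-(1/γ) - 1) ≤ μf k from hl)
    have hEE : -((1:ℝ) + 1/γ) = -(1/γ) - 1 := by ring
    rw [hEE] at hu
    have hl' : C₁ * (k:ℝ) ^ (-(1/γ) - 1) ≤ μf k := hl
    have hu' : μf k ≤ C₂ * (k:ℝ) ^ (-(1/γ) - 1) := hu
    constructor
    · have h1 : Real.log (C₁ * (k:ℝ) ^ (-(1/γ) - 1)) ≤ Real.log (μf k) :=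
        Real.log_le_log (by positivity) hl'
      rw [Real.log_mul hC₁.ne' hkE.ne', Real.log_rpow hk0, hEa] at h1
      have h2 := (div_le_div_iff_of_pos_right hlogk0).mpr h1
      rw [add_div, mul_div_assoc, div_self hlogk0.ne', mul_one] at h2
      exact h2
    · have h1 : Real.log (μf k) ≤ Real.log (C₂ * (k:ℝ) ^ (-(1/γ) - 1)) :=
        Real.log_le_log hμ0 hu'
      rw [Real.log_mul hC₂.ne' hkE.ne', Real.log_rpow hk0, hEa] at h1
      have h2 := (div_le_div_iff_of_pos_right hlogk0).mpr h1
      rw [add_div, mul_div_assoc, div_self hlogk0.ne', mul_one] at h2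
      exact h2
  have hfin : Tendsto (fun k : ℕ => Real.log (μf k) / Real.log k) atTop (𝓝 (-a)) :=
    tendsto_of_tendsto_of_tendsto_of_le_of_le' (hlim C₁) (hlim C₂)
      (key.mono fun k h => h.1) (key.mono fun k h => h.2)
  exact hfin

end aux
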